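/- arXiv:2303.16659 — 7 statements merged into one kernel-verified Lean document; each statement's English description precedes it below -/
import Mathlib

section
/- Let d, m ≥ 1. For each i ∈ {1,…,m} let f_i : ℝ^d → ℝ be differentiable, and suppose there are constants 0 < L'_i < L_i and 0 < M'_i < M_i such that f_i is L'_i-Lipschitz and ∇f_i is M'_i-Lipschitz on ℝ^d. Let x_0 ∈ ℝ^d be strictly feasible, i.e., f_i(x_0) < 0 for all i. Set L_max = max_{1≤i≤m} L_i, l_0 = min_{1≤i≤m} (−f_i(x_0))/L_max, and ν_0 = l_0/√d. Define S_i(x_0) = {x ∈ ℝ^d : f_i(x_0) + ⟨∇^{ν_0} f_i(x_0), x − x_0⟩ + 2 M_i ‖x − x_0‖² ≤ 0} and S(x_0) = ∩_{i=1}^m S_i(x_0). Then: (i) all samples used to compute the estimators are strictly feasible, i.e., f_i(x_0 + ν_0 e_j) < 0 for every i ∈ {1,…,m} and j ∈ {1,…,d}; (ii) x_0 ∈ S(x_0), so in particular S(x_0) is nonempty; (iii) every x ∈ S(x_0) is strictly feasible, i.e., f_i(x) < 0 for all i ∈ {1,…,m}. -/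
open scoped BigOperators

open InnerProductSpace

/-- Quadratic upper bound (descent-lemma style, with constant `M'` instead of `M'/2`)
for a differentiable function whose gradient is `M'`-Lipschitz. -/
lemma taylorAux {d : ℕ} (f : EuclideanSpace ℝ (Fin d) → ℝ) (M' : ℝ) (hM' : 0 ≤ M')
    (hdiff : Differentiable ℝ f)
    (hglip : ∀ x y, ‖gradient f x - gradient f y‖ ≤ M' * ‖x - y‖)
    (x y : EuclideanSpace ℝ (Fin d)) :
    |f y - f x - (inner ℝ (gradient f x) (y - x) : ℝ)| ≤ M' * ‖y - x‖ ^ 2 := by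
  set φ := fderiv ℝ f x with hφ
  have hbound : ∀ z ∈ segment ℝ x y, ‖fderiv ℝ f z - φ‖ ≤ M' * ‖y - x‖ := by
    rintro z ⟨a, b, ha, hb, hab, rfl⟩
    have hzx : (a • x + b • y) - x = b • (y - x) := by
      have : a = 1 - b := by linarith
      rw [this]; module
    have heq : fderiv ℝ f (a • x + b • y) - φ
        = toDual ℝ _ (gradient f (a • x + b • y) - gradient f x) := by
      simp [gradient, hφ, map_sub]
    rw [heq, (toDual ℝ _).norm_map]
    calc ‖gradient f (a • x + b • y) - gradient f x‖
        ≤ M' * ‖(a • x + b • y) - x‖ := hglip _ _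
      _ ≤ M' * ‖y - x‖ := by
          rw [hzx, norm_smul]
          have : ‖(b:ℝ)‖ ≤ 1 := by rw [Real.norm_eq_abs, abs_of_nonneg hb]; linarith
          have h0 : (0:ℝ) ≤ ‖y - x‖ := norm_nonneg _
          have h1 : ‖(b:ℝ)‖ * ‖y - x‖ ≤ ‖y - x‖ := mul_le_of_le_one_left h0 this
          exact mul_le_mul_of_nonneg_left h1 hM'
  have key := (convex_segment x y).norm_image_sub_le_of_norm_fderiv_le'
    (fun z _ => (hdiff z)) hbound
    (left_mem_segment ℝ x y) (right_mem_segment ℝ x y)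
  have hφapp : φ (y - x) = (inner ℝ (gradient f x) (y - x) : ℝ) := by
    rw [gradient, toDual_symm_apply]
  rw [hφapp, Real.norm_eq_abs] at key
  calc |f y - f x - (inner ℝ (gradient f x) (y - x) : ℝ)| ≤ M' * ‖y - x‖ * ‖y - x‖ := key
    _ = M' * ‖y - x‖ ^ 2 := by ring

lemma sumSingleApply {d : ℕ} (g : Fin d → ℝ) (j : Fin d) :
    (∑ k : Fin d, g k • EuclideanSpace.single k (1:ℝ)) j = g j := by
  classical
  have : (∑ k : Fin d, g k • EuclideanSpace.single k (1:ℝ)) j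
      = ∑ k : Fin d, (g k • EuclideanSpace.single k (1:ℝ)) j :=
    by rw [WithLp.ofLp_sum, Finset.sum_apply]
  rw [this]
  simp [EuclideanSpace.single_apply]

lemma normLeOfCoord {d : ℕ} (v : EuclideanSpace ℝ (Fin d)) (c : ℝ) (hc : 0 ≤ c)
    (h : ∀ j, |v j| ≤ c) : ‖v‖ ≤ Real.sqrt d * c := by
  rw [EuclideanSpace.norm_eq]
  have hs : ∑ j, ‖v j‖ ^ 2 ≤ d * c ^ 2 := by
    calc ∑ j, ‖v j‖ ^ 2 ≤ ∑ _j : Fin d, c ^ 2 := by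
          apply Finset.sum_le_sum
          intro j _
          have := h j
          rw [Real.norm_eq_abs]
          nlinarith [abs_nonneg (v j)]
      _ = d * c ^ 2 := by simp [mul_comm]
  calc Real.sqrt (∑ j, ‖v j‖ ^ 2) ≤ Real.sqrt (d * c ^ 2) := Real.sqrt_le_sqrt hs
    _ = Real.sqrt d * c := by
        rw [Real.sqrt_mul (by positivity), Real.sqrt_sq hc]

/-- The finite-difference gradient estimator
`∇^ν f(x) = ∑_{j=1}^d ((f(x + ν e_j) − f(x))/ν) e_j`. -/
noncomputable def fdGrad {d : ℕ} (f : EuclideanSpace ℝ (Fin d) → ℝ) (ν : ℝ)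
    (x : EuclideanSpace ℝ (Fin d)) : EuclideanSpace ℝ (Fin d) :=
  ∑ j : Fin d, ((f (x + ν • EuclideanSpace.single j (1 : ℝ)) - f x) / ν) •
    EuclideanSpace.single j (1 : ℝ)

/-- Safety of the local feasible set built at a strictly feasible point `x₀`:
(i) all samples used in the finite-difference estimators are strictly feasible;
(ii) `x₀` belongs to the local feasible set `S(x₀)` (so it is nonempty);
(iii) every point of `S(x₀)` is strictly feasible. -/
theorem stmt1 {d m : ℕ} (hd : 1 ≤ d) (hm : 1 ≤ m)
    (f : Fin m → EuclideanSpace ℝ (Fin d) → ℝ)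
    (L L' M M' : Fin m → ℝ)
    (hL'pos : ∀ i, 0 < L' i) (hL'L : ∀ i, L' i < L i)
    (hM'pos : ∀ i, 0 < M' i) (hM'M : ∀ i, M' i < M i)
    (hdiff : ∀ i, Differentiable ℝ (f i))
    (hlip : ∀ i, ∀ x y : EuclideanSpace ℝ (Fin d), |f i x - f i y| ≤ L' i * ‖x - y‖)
    (hglip : ∀ i, ∀ x y : EuclideanSpace ℝ (Fin d),
      ‖gradient (f i) x - gradient (f i) y‖ ≤ M' i * ‖x - y‖)
    (x0 : EuclideanSpace ℝ (Fin d)) (hfeas : ∀ i, f i x0 < 0)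
    (Lmax l0 ν0 : ℝ)
    (hLmax : IsGreatest (Set.range L) Lmax)
    (hl0 : IsLeast (Set.range fun i => -(f i x0) / Lmax) l0)
    (hν0 : ν0 = l0 / Real.sqrt d) :
    (∀ i : Fin m, ∀ j : Fin d,
        f i (x0 + ν0 • EuclideanSpace.single j (1 : ℝ)) < 0) ∧
    (x0 ∈ ⋂ i : Fin m, {x : EuclideanSpace ℝ (Fin d) |
        f i x0 + (inner ℝ (fdGrad (f i) ν0 x0) (x - x0) : ℝ)
          + 2 * M i * ‖x - x0‖ ^ 2 ≤ 0}) ∧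
    (∀ x ∈ ⋂ i : Fin m, {x : EuclideanSpace ℝ (Fin d) |
        f i x0 + (inner ℝ (fdGrad (f i) ν0 x0) (x - x0) : ℝ)
          + 2 * M i * ‖x - x0‖ ^ 2 ≤ 0},
      ∀ i : Fin m, f i x < 0) := by
  classical
  obtain ⟨hmem, hub⟩ := hLmax
  obtain ⟨i0, hi0⟩ := hmem
  have hLmaxpos : 0 < Lmax := hi0 ▸ lt_trans (hL'pos i0) (hL'L i0)
  have hLle : ∀ i, L i ≤ Lmax := fun i => hub ⟨i, rfl⟩
  obtain ⟨i1, hi1⟩ := hl0.1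
  have hl0pos : 0 < l0 := by
    rw [← hi1]; exact div_pos (by linarith [hfeas i1]) hLmaxpos
  have hl0le : ∀ i, Lmax * l0 ≤ -(f i x0) := by
    intro i
    have h := hl0.2 ⟨i, rfl⟩
    calc Lmax * l0 ≤ Lmax * (-(f i x0) / Lmax) := by
          exact mul_le_mul_of_nonneg_left h hLmaxpos.le
      _ = -(f i x0) := by field_simp
  have hsqd : 1 ≤ Real.sqrt d := by
    rw [show (1:ℝ) = Real.sqrt 1 by simp]
    exact Real.sqrt_le_sqrt (by exact_mod_cast hd)
  have hsqdpos : 0 < Real.sqrt d := lt_of_lt_of_le one_pos hsqd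
  have hν0pos : 0 < ν0 := hν0 ▸ div_pos hl0pos hsqdpos
  have hν0le : ν0 ≤ l0 := hν0 ▸ div_le_self hl0pos.le hsqd
  have hν0sq : Real.sqrt d * ν0 = l0 := by
    rw [hν0]; field_simp
  -- Part (i)
  have parti : ∀ i : Fin m, ∀ j : Fin d,
      f i (x0 + ν0 • EuclideanSpace.single j (1 : ℝ)) < 0 := by
    intro i j
    have hnrm : ‖(x0 + ν0 • EuclideanSpace.single j (1:ℝ)) - x0‖ = ν0 := by
      rw [add_sub_cancel_left, norm_smul, EuclideanSpace.norm_single]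
      simp [abs_of_pos hν0pos]
    have h1 := le_of_abs_le (hlip i (x0 + ν0 • EuclideanSpace.single j (1:ℝ)) x0)
    rw [hnrm] at h1
    have h2 : L' i * ν0 < Lmax * l0 := by
      have hLi : L' i < Lmax := lt_of_lt_of_le (hL'L i) (hLle i)
      nlinarith [hL'pos i, hν0pos]
    linarith [hl0le i]
  refine ⟨parti, ?_, ?_⟩
  · -- Part (ii)
    simp only [Set.mem_iInter, Set.mem_setOf_eq]
    intro i
    simp only [sub_self, inner_zero_right, norm_zero]
    have := hfeas i
    norm_num
    linarith
  · -- Part (iii)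
    intro x hx i
    have hxI : f i x0 + (inner ℝ (fdGrad (f i) ν0 x0) (x - x0) : ℝ)
        + 2 * M i * ‖x - x0‖ ^ 2 ≤ 0 := Set.mem_iInter.mp hx i
    set G := gradient (f i) x0 with hG
    set g := fdGrad (f i) ν0 x0 with hg
    set r := ‖x - x0‖ with hr
    have hrnn : 0 ≤ r := norm_nonneg _
    -- coordinatewise error bound
    have hcoord : ∀ j : Fin d, |(g - G) j| ≤ M' i * ν0 := by
      intro j
      set y := x0 + ν0 • EuclideanSpace.single j (1:ℝ) with hy
      have hgj : g j = (f i y - f i x0) / ν0 := by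
        rw [hg, fdGrad]
        exact sumSingleApply (fun k => (f i (x0 + ν0 • EuclideanSpace.single k (1:ℝ)) - f i x0) / ν0) j
      have hnrm : ‖y - x0‖ = ν0 := by
        rw [hy, add_sub_cancel_left, norm_smul, EuclideanSpace.norm_single]
        simp [abs_of_pos hν0pos]
      have hinner : (inner ℝ G (y - x0) : ℝ) = ν0 * G j := by
        rw [hy, add_sub_cancel_left, real_inner_smul_right]
        congr 1
        simp [EuclideanSpace.inner_single_right]
      have ht := taylorAux (f i) (M' i) (hM'pos i).le (hdiff i) (hglip i) x0 y
      rw [hnrm, hinner] at ht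
      have hsub : (g - G) j = g j - G j := rfl
      have heq : (g - G) j = (f i y - f i x0 - ν0 * G j) / ν0 := by
        rw [hsub, hgj]; field_simp
      rw [heq, abs_div, abs_of_pos hν0pos, div_le_iff₀ hν0pos]
      calc |f i y - f i x0 - ν0 * G j| ≤ M' i * ν0 ^ 2 := ht
        _ = M' i * ν0 * ν0 := by ring
    have hnormerr : ‖g - G‖ ≤ M' i * l0 := by
      have := normLeOfCoord (g - G) (M' i * ν0)
        (mul_nonneg (hM'pos i).le hν0pos.le) hcoord
      calc ‖g - G‖ ≤ Real.sqrt d * (M' i * ν0) := this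
        _ = M' i * (Real.sqrt d * ν0) := by ring
        _ = M' i * l0 := by rw [hν0sq]
    have hGu : (inner ℝ G (x - x0) : ℝ) ≤ (inner ℝ g (x - x0) : ℝ) + M' i * l0 * r := by
      have h1 : (inner ℝ (G - g) (x - x0) : ℝ) ≤ ‖G - g‖ * r := real_inner_le_norm _ _
      have h2 : ‖G - g‖ = ‖g - G‖ := norm_sub_rev _ _
      have h3 : (inner ℝ (G - g) (x - x0) : ℝ)
          = (inner ℝ G (x - x0) : ℝ) - (inner ℝ g (x - x0) : ℝ) := by
        rw [inner_sub_left]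
      have h4 : ‖g - G‖ * r ≤ M' i * l0 * r := mul_le_mul_of_nonneg_right hnormerr hrnn
      rw [h3, h2] at h1
      linarith
    have htay : f i x ≤ f i x0 + (inner ℝ G (x - x0) : ℝ) + M' i * r ^ 2 := by
      have := le_of_abs_le (taylorAux (f i) (M' i) (hM'pos i).le (hdiff i) (hglip i) x0 x)
      linarith
    have hlipx : f i x - f i x0 ≤ L' i * r := le_of_abs_le (hlip i x x0)
    rcases le_or_gt r l0 with hc | hc
    · have hLi : L' i < Lmax := lt_of_lt_of_le (hL'L i) (hLle i)
      nlinarith [hl0le i, hL'pos i, hl0pos]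
    · have hrpos : 0 < r := lt_trans hl0pos hc
      have h5 : M' i * l0 * r < M' i * r ^ 2 := by
        have h := mul_lt_mul_of_pos_right (mul_lt_mul_of_pos_left hc (hM'pos i)) hrpos
        nlinarith [h]
      have h6 : M' i * r ^ 2 < M i * r ^ 2 := by
        have := mul_lt_mul_of_pos_right (hM'M i) (pow_pos hrpos 2)
        linarith
      linarith [htay, hGu, hxI, h5, h6]
end

section
/- Let d ≥ 1, L, M > 0, and let f : ℝ^d → ℝ be differentiable, L-Lipschitz, and with M-Lipschitz gradient. Let x_0 ∈ ℝ^d satisfy f(x_0) < 0 and set l = −f(x_0)/L. Let g ∈ ℝ^d be any estimate of the gradient such that ‖g − ∇f(x_0)‖ ≤ M·l/2. Then every x ∈ ℝ^d satisfying f(x_0) + ⟨g, x − x_0⟩ + 2M‖x − x_0‖² ≤ 0 satisfies f(x) ≤ 0. -/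
theorem descent {d : ℕ} (M : ℝ) (hM : 0 ≤ M) (f : EuclideanSpace ℝ (Fin d) → ℝ)
    (hf : Differentiable ℝ f)
    (hglip : ∀ x y : EuclideanSpace ℝ (Fin d),
      ‖gradient f x - gradient f y‖ ≤ M * ‖x - y‖)
    (x0 x : EuclideanSpace ℝ (Fin d)) :
    f x - f x0 - (inner ℝ (gradient f x0) (x - x0) : ℝ) ≤ M * ‖x - x0‖ ^ 2 := by
  set G := gradient f x0 with hG
  set h : EuclideanSpace ℝ (Fin d) → ℝ := fun y => f y - (inner ℝ G y : ℝ) with hh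
  have hdiff : Differentiable ℝ h := hf.sub (innerSL ℝ G).differentiable
  have hfd : ∀ y, fderiv ℝ h y = fderiv ℝ f y - innerSL ℝ G := by
    intro y
    have : fderiv ℝ h y = fderiv ℝ f y - fderiv ℝ (fun z => ((innerSL ℝ G) z : ℝ)) y := by
      apply fderiv_sub (hf y) ((innerSL ℝ G).differentiable y)
    rw [this, (innerSL ℝ G).fderiv]
  have key : ∀ y ∈ segment ℝ x0 x, ‖fderiv ℝ h y‖ ≤ M * ‖x - x0‖ := by
    intro y hy
    rw [hfd]
    have h1 : ‖fderiv ℝ f y - innerSL ℝ G‖ = ‖gradient f y - G‖ := by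
      have h2 : fderiv ℝ f y = (InnerProductSpace.toDual ℝ _) (gradient f y) := by
        simp [gradient]
      have h3 : (innerSL ℝ G : EuclideanSpace ℝ (Fin d) →L[ℝ] ℝ) = (InnerProductSpace.toDual ℝ _) G := rfl
      rw [h2, h3, ← map_sub]
      exact (InnerProductSpace.toDual ℝ _).norm_map _
    rw [h1]
    calc ‖gradient f y - G‖ ≤ M * ‖y - x0‖ := hglip y x0
      _ ≤ M * ‖x - x0‖ := by
        obtain ⟨a, b, ha, hb, hab, rfl⟩ := hy
        have : a • x0 + b • x - x0 = b • (x - x0) := by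
          have : a = 1 - b := by linarith
          rw [this]; module
        rw [this, norm_smul]
        simp only [Real.norm_eq_abs, abs_of_nonneg hb]
        have : b ≤ 1 := by linarith
        nlinarith [mul_nonneg (mul_nonneg hM (sub_nonneg.2 this)) (norm_nonneg (x - x0))]
  have := (convex_segment x0 x).norm_image_sub_le_of_norm_fderiv_le
    (fun y _ => hdiff y) key (left_mem_segment ℝ x0 x) (right_mem_segment ℝ x0 x)
  have hxx : h x - h x0 = f x - f x0 - (inner ℝ G (x - x0) : ℝ) := by
    simp only [hh, inner_sub_right]
    ring
  calc f x - f x0 - (inner ℝ G (x - x0) : ℝ) = h x - h x0 := hxx.symm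
    _ ≤ ‖h x - h x0‖ := Real.le_norm_self _
    _ ≤ M * ‖x - x0‖ * ‖x - x0‖ := this
    _ = M * ‖x - x0‖ ^ 2 := by ring

/-- Safety of the quadratic local feasible set built from an arbitrary gradient
estimate `g` with error at most `M·l/2`, where `l = −f(x₀)/L`: every point of
`{x : f(x₀) + ⟨g, x − x₀⟩ + 2M‖x − x₀‖² ≤ 0}` satisfies `f(x) ≤ 0`. -/
theorem stmt2 {d : ℕ} (hd : 1 ≤ d) (L M : ℝ) (hL : 0 < L) (hM : 0 < M)
    (f : EuclideanSpace ℝ (Fin d) → ℝ) (hf : Differentiable ℝ f)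
    (hlip : ∀ x y : EuclideanSpace ℝ (Fin d), |f x - f y| ≤ L * ‖x - y‖)
    (hglip : ∀ x y : EuclideanSpace ℝ (Fin d),
      ‖gradient f x - gradient f y‖ ≤ M * ‖x - y‖)
    (x0 : EuclideanSpace ℝ (Fin d)) (hx0 : f x0 < 0)
    (l : ℝ) (hl : l = -(f x0) / L)
    (g : EuclideanSpace ℝ (Fin d)) (hg : ‖g - gradient f x0‖ ≤ M * l / 2)
    (x : EuclideanSpace ℝ (Fin d))
    (hx : f x0 + (inner ℝ g (x - x0) : ℝ) + 2 * M * ‖x - x0‖ ^ 2 ≤ 0) :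
    f x ≤ 0 := by
  set r := ‖x - x0‖ with hr
  have hr0 : 0 ≤ r := norm_nonneg _
  have hfl : f x0 = -(L * l) := by rw [hl, mul_div_assoc', mul_comm L, mul_div_assoc, div_self hL.ne', mul_one, neg_neg]
  have hl0 : 0 < l := by
    rw [hl]; exact div_pos (by linarith) hL
  by_cases hcase : r ≤ l
  · -- Lipschitz case
    have := hlip x x0
    have h1 : f x - f x0 ≤ L * r := (abs_le.1 this).2
    nlinarith
  · -- descent case
    push_neg at hcase
    have hdes := descent M hM.le f hf hglip x0 x
    have hinner : (inner ℝ (gradient f x0) (x - x0) : ℝ) ≤ (inner ℝ g (x - x0) : ℝ) + M * l / 2 * r := by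
      have h2 : (inner ℝ (gradient f x0 - g) (x - x0) : ℝ) ≤ ‖gradient f x0 - g‖ * r :=
        real_inner_le_norm _ _
      have h3 : ‖gradient f x0 - g‖ = ‖g - gradient f x0‖ := norm_sub_rev _ _
      rw [inner_sub_left] at h2
      nlinarith
    rw [← hr] at hdes
    nlinarith [mul_nonneg (mul_nonneg hM.le hr0) (show (0:ℝ) ≤ r - l/2 by linarith)]
end

section
/- Let d ≥ 1, M > 0, and let f : ℝ^d → ℝ be differentiable with M-Lipschitz gradient. Let ν > 0 and let x_0, x ∈ ℝ^d satisfy ‖x − x_0‖ ≥ √d · ν. Then f(x) ≤ f(x_0) + ⟨∇^ν f(x_0), x − x_0⟩ + 2M‖x − x_0‖², i.e., outside the ball of radius √d·ν around x_0 the quadratic proxy built from the finite-difference gradient estimate upper-bounds f. -/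
open scoped BigOperators

lemma taylor_aux {d : ℕ} (M : ℝ) (hM : 0 ≤ M) (f : EuclideanSpace ℝ (Fin d) → ℝ)
    (hf : Differentiable ℝ f)
    (hglip : ∀ x y : EuclideanSpace ℝ (Fin d),
      ‖gradient f x - gradient f y‖ ≤ M * ‖x - y‖)
    (x y : EuclideanSpace ℝ (Fin d)) :
    |f y - f x - (inner ℝ (gradient f x) (y - x) : ℝ)| ≤ M * ‖y - x‖ ^ 2 := by
  set v := y - x with hv
  set g : ℝ → ℝ := fun t => f (x + t • v) - t * (inner ℝ (gradient f x) v : ℝ) with hg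
  have hderiv : ∀ t : ℝ, HasDerivAt g
      ((inner ℝ (gradient f (x + t • v)) v : ℝ) - (inner ℝ (gradient f x) v : ℝ)) t := by
    intro t
    have hcurve : HasDerivAt (fun t : ℝ => x + t • v) v t := by
      simpa using ((hasDerivAt_id t).smul_const v).const_add x
    have h1 : HasDerivAt (fun t : ℝ => f (x + t • v))
        ((inner ℝ (gradient f (x + t • v)) v : ℝ)) t := by
      have := ((hf (x + t • v)).hasGradientAt.hasFDerivAt).comp_hasDerivAt t hcurve
      simpa [InnerProductSpace.toDual_apply_apply, Function.comp_def] using this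
    simpa [hg, Pi.sub_def] using h1.sub (((hasDerivAt_id t).mul_const (inner ℝ (gradient f x) v : ℝ)))
  have hbound : ∀ t ∈ Set.Icc (0:ℝ) 1,
      ‖(inner ℝ (gradient f (x + t • v)) v : ℝ) - (inner ℝ (gradient f x) v : ℝ)‖ ≤ M * ‖v‖ ^ 2 := by
    intro t ht
    rw [← inner_sub_left]
    calc ‖(inner ℝ (gradient f (x + t • v) - gradient f x) v : ℝ)‖
        ≤ ‖gradient f (x + t • v) - gradient f x‖ * ‖v‖ := norm_inner_le_norm _ _
      _ ≤ (M * ‖(x + t • v) - x‖) * ‖v‖ := by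
          gcongr; exact hglip _ _
      _ ≤ M * ‖v‖ ^ 2 := by
          have : ‖(x + t • v) - x‖ = |t| * ‖v‖ := by simp [norm_smul]
          rw [this, abs_of_nonneg ht.1]
          nlinarith [norm_nonneg v, ht.1, ht.2, mul_nonneg hM (mul_nonneg (norm_nonneg v) (norm_nonneg v))]
  have key := (convex_Icc (0:ℝ) 1).norm_image_sub_le_of_norm_hasDerivWithin_le
    (fun t _ => (hderiv t).hasDerivWithinAt) hbound
    (Set.left_mem_Icc.2 zero_le_one) (Set.right_mem_Icc.2 zero_le_one)
  have hg1 : g 1 = f y - (inner ℝ (gradient f x) v : ℝ) := by simp [hg, hv]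
  have hg0 : g 0 = f x := by simp [hg]
  rw [hg1, hg0] at key
  simpa [abs_sub_comm, sub_sub, add_comm] using key

lemma fdgrad_err {d : ℕ} (M : ℝ) (hM : 0 ≤ M)
    (f : EuclideanSpace ℝ (Fin d) → ℝ) (hf : Differentiable ℝ f)
    (hglip : ∀ x y : EuclideanSpace ℝ (Fin d),
      ‖gradient f x - gradient f y‖ ≤ M * ‖x - y‖)
    (ν : ℝ) (hν : 0 < ν) (x0 : EuclideanSpace ℝ (Fin d)) :
    ‖fdGrad f ν x0 - gradient f x0‖ ≤ Real.sqrt d * (M * ν) := by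
  have hcoord : ∀ j : Fin d,
      |(fdGrad f ν x0 - gradient f x0) j| ≤ M * ν := by
    intro j
    have hco : (fdGrad f ν x0) j
        = (f (x0 + ν • EuclideanSpace.single j (1 : ℝ)) - f x0) / ν := by
      have h := map_sum (EuclideanSpace.proj j (𝕜 := ℝ)).toLinearMap
        (fun i : Fin d => ((f (x0 + ν • EuclideanSpace.single i (1 : ℝ)) - f x0) / ν) •
          EuclideanSpace.single i (1 : ℝ)) Finset.univ
      simp only [ContinuousLinearMap.coe_coe, PiLp.proj_apply] at h
      unfold fdGrad
      rw [h]
      simp [EuclideanSpace.single_apply]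
    have ht := taylor_aux M hM f hf hglip x0 (x0 + ν • EuclideanSpace.single j (1 : ℝ))
    have hin : (inner ℝ (gradient f x0) ((x0 + ν • EuclideanSpace.single j (1 : ℝ)) - x0) : ℝ)
        = ν * gradient f x0 j := by
      rw [add_sub_cancel_left, real_inner_smul_right]
      rw [EuclideanSpace.inner_single_right]; simp
    have hnr : ‖(x0 + ν • EuclideanSpace.single j (1 : ℝ)) - x0‖ = ν := by
      rw [add_sub_cancel_left, norm_smul]
      simp [EuclideanSpace.norm_single, abs_of_pos hν]
    rw [hin, hnr] at ht
    have : (fdGrad f ν x0 - gradient f x0) j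
        = (f (x0 + ν • EuclideanSpace.single j (1 : ℝ)) - f x0 - ν * gradient f x0 j) / ν := by
      rw [PiLp.sub_apply, hco]
      field_simp
    rw [this, abs_div, abs_of_pos hν, div_le_iff₀ hν]
    calc |f (x0 + ν • EuclideanSpace.single j (1 : ℝ)) - f x0 - ν * gradient f x0 j|
        ≤ M * ν ^ 2 := ht
      _ = M * ν * ν := by ring
  have hMν : 0 ≤ M * ν := mul_nonneg hM hν.le
  rw [EuclideanSpace.norm_eq]
  have : Real.sqrt d * (M * ν) = Real.sqrt (d * (M * ν) ^ 2) := by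
    rw [Real.sqrt_mul (Nat.cast_nonneg d), Real.sqrt_sq hMν]
  rw [this]
  apply Real.sqrt_le_sqrt
  calc ∑ i : Fin d, ‖(fdGrad f ν x0 - gradient f x0) i‖ ^ 2
      ≤ ∑ _i : Fin d, (M * ν) ^ 2 := by
        apply Finset.sum_le_sum
        intro i _
        rw [Real.norm_eq_abs]
        exact pow_le_pow_left₀ (abs_nonneg _) (hcoord i) 2
    _ = d * (M * ν) ^ 2 := by simp [Finset.sum_const]

/-- Outside the ball of radius `√d·ν` around `x₀`, the quadratic proxy built
from the finite-difference gradient estimate upper-bounds `f`. -/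
theorem stmt3 {d : ℕ} (hd : 1 ≤ d) (M : ℝ) (hM : 0 < M)
    (f : EuclideanSpace ℝ (Fin d) → ℝ) (hf : Differentiable ℝ f)
    (hglip : ∀ x y : EuclideanSpace ℝ (Fin d),
      ‖gradient f x - gradient f y‖ ≤ M * ‖x - y‖)
    (ν : ℝ) (hν : 0 < ν)
    (x0 x : EuclideanSpace ℝ (Fin d)) (hx : Real.sqrt d * ν ≤ ‖x - x0‖) :
    f x ≤ f x0 + (inner ℝ (fdGrad f ν x0) (x - x0) : ℝ) + 2 * M * ‖x - x0‖ ^ 2 := by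
  have ht := (abs_le.1 (taylor_aux M hM.le f hf hglip x0 x)).2
  have herr := fdgrad_err M hM.le f hf hglip ν hν x0
  have hdiff : (inner ℝ (gradient f x0) (x - x0) : ℝ) - inner ℝ (fdGrad f ν x0) (x - x0)
      = (inner ℝ (gradient f x0 - fdGrad f ν x0) (x - x0) : ℝ) := (inner_sub_left _ _ _).symm
  have hb : (inner ℝ (gradient f x0 - fdGrad f ν x0) (x - x0) : ℝ)
      ≤ ‖gradient f x0 - fdGrad f ν x0‖ * ‖x - x0‖ := real_inner_le_norm _ _
  have hn : ‖gradient f x0 - fdGrad f ν x0‖ ≤ Real.sqrt d * (M * ν) := by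
    rwa [norm_sub_rev]
  have hkey : Real.sqrt d * (M * ν) * ‖x - x0‖ ≤ M * ‖x - x0‖ ^ 2 := by
    rw [pow_two]
    have h1 : Real.sqrt d * (M * ν) * ‖x - x0‖
        = M * ((Real.sqrt d * ν) * ‖x - x0‖) := by ring
    rw [h1]
    gcongr
  nlinarith [norm_nonneg (x - x0), mul_le_mul_of_nonneg_right hn (norm_nonneg (x - x0))]
end

section
/- Let d ≥ 1 and let f : ℝ^d → ℝ be differentiable, L'-Lipschitz, and with M-Lipschitz gradient, where 0 < L' < L and M > 0. Let x_0 ∈ ℝ^d satisfy f(x_0) < 0 and suppose −f(x_0) ≤ L(L − L')/(4M). Let ν satisfy 0 < ν ≤ (−f(x_0))/(√d · L). Then the Lipschitz-based local feasible set T = {x ∈ ℝ^d : ‖x − x_0‖ ≤ −f(x_0)/L} is contained in the quadratic local feasible set S = {x ∈ ℝ^d : f(x_0) + ⟨∇^ν f(x_0), x − x_0⟩ + 2M‖x − x_0‖² ≤ 0}; i.e., when the current point is sufficiently close to the constraint boundary, the quadratic construction is less conservative than the Lipschitz-ball construction. -/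
open scoped BigOperators

set_option maxHeartbeats 1000000 in
/-- Near the boundary, the Lipschitz-ball local feasible set `T` is contained
in the quadratic local feasible set `S` built from the finite-difference
gradient estimate. -/
theorem stmt4 {d : ℕ} (hd : 1 ≤ d) (L L' M : ℝ)
    (hL' : 0 < L') (hL'L : L' < L) (hM : 0 < M)
    (f : EuclideanSpace ℝ (Fin d) → ℝ) (hf : Differentiable ℝ f)
    (hlip : ∀ x y : EuclideanSpace ℝ (Fin d), |f x - f y| ≤ L' * ‖x - y‖)
    (hglip : ∀ x y : EuclideanSpace ℝ (Fin d),
      ‖gradient f x - gradient f y‖ ≤ M * ‖x - y‖)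
    (x0 : EuclideanSpace ℝ (Fin d)) (hx0 : f x0 < 0)
    (hclose : -(f x0) ≤ L * (L - L') / (4 * M))
    (ν : ℝ) (hν0 : 0 < ν) (hν : ν ≤ -(f x0) / (Real.sqrt d * L)) :
    {x : EuclideanSpace ℝ (Fin d) | ‖x - x0‖ ≤ -(f x0) / L} ⊆
      {x : EuclideanSpace ℝ (Fin d) |
        f x0 + (inner ℝ (fdGrad f ν x0) (x - x0) : ℝ) + 2 * M * ‖x - x0‖ ^ 2 ≤ 0} := by
  have hL : (0:ℝ) < L := hL'.trans hL'L
  set r : ℝ := -(f x0) / L with hr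
  have hr0 : 0 < r := div_pos (by linarith) hL
  have hsd1 : (1:ℝ) ≤ Real.sqrt d := by
    rw [show (1:ℝ) = Real.sqrt 1 by simp]
    exact Real.sqrt_le_sqrt (by exact_mod_cast hd)
  have hsd0 : (0:ℝ) < Real.sqrt d := by linarith
  -- toDual relation
  have htd : ∀ z, (InnerProductSpace.toDual ℝ (EuclideanSpace ℝ (Fin d))) (gradient f z)
      = fderiv ℝ f z := by
    intro z; rw [gradient]
    exact (InnerProductSpace.toDual ℝ _).apply_symm_apply _
  have hfd : ∀ z v, fderiv ℝ f z v = (inner ℝ (gradient f z) v : ℝ) := by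
    intro z v; rw [← htd z]; rfl
  set G := gradient f x0 with hG
  -- norm of gradient bounded by L'
  have hGle : ‖G‖ ≤ L' := by
    have hlw : LipschitzWith (Real.toNNReal L') f := by
      rw [lipschitzWith_iff_dist_le_mul]
      intro x y
      rw [Real.coe_toNNReal _ hL'.le, dist_eq_norm, dist_eq_norm]
      simpa [Real.norm_eq_abs] using hlip x y
    have := norm_fderiv_le_of_lipschitz ℝ hlw (x₀ := x0)
    rw [Real.coe_toNNReal _ hL'.le] at this
    calc ‖G‖ = ‖(InnerProductSpace.toDual ℝ (EuclideanSpace ℝ (Fin d))) G‖ :=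
          ((InnerProductSpace.toDual ℝ _).norm_map G).symm
      _ = ‖fderiv ℝ f x0‖ := by rw [hG, htd]
      _ ≤ L' := this
  -- component error bound
  have hcomp : ∀ j : Fin d,
      |(f (x0 + ν • EuclideanSpace.single j (1:ℝ)) - f x0) / ν - G j| ≤ M * ν := by
    intro j
    set e : EuclideanSpace ℝ (Fin d) := EuclideanSpace.single j (1:ℝ) with he
    have hne : ‖e‖ = 1 := by simp [he]
    have hmem : x0 + ν • e ∈ Metric.closedBall x0 ν := by
      rw [Metric.mem_closedBall, dist_eq_norm]
      simp [norm_smul, hne, abs_of_pos hν0]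
    have hbound : ∀ z ∈ Metric.closedBall x0 ν,
        ‖fderiv ℝ f z - fderiv ℝ f x0‖ ≤ M * ν := by
      intro z hz
      have : fderiv ℝ f z - fderiv ℝ f x0
          = (InnerProductSpace.toDual ℝ (EuclideanSpace ℝ (Fin d))) (gradient f z - G) := by
        rw [map_sub, htd, hG, htd]
      rw [this, (InnerProductSpace.toDual ℝ _).norm_map]
      calc ‖gradient f z - G‖ ≤ M * ‖z - x0‖ := hglip z x0
        _ ≤ M * ν := by
            have := hz
            rw [Metric.mem_closedBall, dist_eq_norm] at this
            exact mul_le_mul_of_nonneg_left this hM.le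
    have key := Convex.norm_image_sub_le_of_norm_fderiv_le' (f := f) (φ := fderiv ℝ f x0)
      (fun z _ => hf z) hbound (convex_closedBall x0 ν)
      (Metric.mem_closedBall_self hν0.le) hmem
    rw [show x0 + ν • e - x0 = ν • e by abel] at key
    rw [map_smul, norm_smul, hne] at key
    have hGj : fderiv ℝ f x0 e = G j := by
      rw [hfd, hG, he, EuclideanSpace.inner_single_right]; simp
    rw [hGj] at key
    simp only [smul_eq_mul, Real.norm_eq_abs, abs_of_pos hν0, mul_one] at key
    have : |f (x0 + ν • e) - f x0 - ν * G j| ≤ M * ν * ν := key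
    rw [show (f (x0 + ν • e) - f x0) / ν - G j
        = (f (x0 + ν • e) - f x0 - ν * G j) / ν by field_simp]
    rw [abs_div, abs_of_pos hν0, div_le_iff₀ hν0]
    linarith [this]
  -- norm error bound
  have herr : ‖fdGrad f ν x0 - G‖ ≤ Real.sqrt d * (M * ν) := by
    have hMν : 0 ≤ M * ν := by positivity
    rw [EuclideanSpace.norm_eq]
    have hle : ∑ i : Fin d, ‖(fdGrad f ν x0 - G) i‖ ^ 2 ≤ ∑ _i : Fin d, (M * ν) ^ 2 := by
      apply Finset.sum_le_sum
      intro i _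
      have hcompi : (fdGrad f ν x0 - G) i
          = (f (x0 + ν • EuclideanSpace.single i (1:ℝ)) - f x0) / ν - G i := by
        have h1 : (fdGrad f ν x0) i
            = (f (x0 + ν • EuclideanSpace.single i (1:ℝ)) - f x0) / ν := by
          have h2 : (fdGrad f ν x0) i = ∑ j : Fin d,
              (((f (x0 + ν • EuclideanSpace.single j (1:ℝ)) - f x0) / ν) •
                EuclideanSpace.single j (1:ℝ)) i :=
            by rw [fdGrad, WithLp.ofLp_sum]; exact Finset.sum_apply i Finset.univ _
          rw [h2]
          simp [EuclideanSpace.single_apply]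
        have : (fdGrad f ν x0 - G) i = (fdGrad f ν x0) i - G i := rfl
        rw [this, h1]
      rw [hcompi, Real.norm_eq_abs]
      exact pow_le_pow_left₀ (abs_nonneg _) (hcomp i) 2
    calc Real.sqrt (∑ i : Fin d, ‖(fdGrad f ν x0 - G) i‖ ^ 2)
        ≤ Real.sqrt (∑ _i : Fin d, (M * ν) ^ 2) := Real.sqrt_le_sqrt hle
      _ = Real.sqrt (d * (M * ν) ^ 2) := by rw [Finset.sum_const, Finset.card_univ,
          Fintype.card_fin, nsmul_eq_mul]
      _ = Real.sqrt d * (M * ν) := by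
          rw [Real.sqrt_mul (by positivity), Real.sqrt_sq hMν]
  -- main argument
  intro x hx
  simp only [Set.mem_setOf_eq] at hx ⊢
  set h : EuclideanSpace ℝ (Fin d) := x - x0 with hh
  have hhr : ‖h‖ ≤ r := hx
  have hinner : (inner ℝ (fdGrad f ν x0) h : ℝ)
      ≤ L' * ‖h‖ + Real.sqrt d * (M * ν) * ‖h‖ := by
    have h1 : (inner ℝ (fdGrad f ν x0) h : ℝ)
        = (inner ℝ G h : ℝ) + (inner ℝ (fdGrad f ν x0 - G) h : ℝ) := by
      rw [← inner_add_left]; congr 1; abel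
    rw [h1]
    have h2 : (inner ℝ G h : ℝ) ≤ L' * ‖h‖ :=
      (real_inner_le_norm G h).trans (mul_le_mul_of_nonneg_right hGle (norm_nonneg _))
    have h3 : (inner ℝ (fdGrad f ν x0 - G) h : ℝ) ≤ Real.sqrt d * (M * ν) * ‖h‖ :=
      (real_inner_le_norm _ h).trans (mul_le_mul_of_nonneg_right herr (norm_nonneg _))
    linarith
  -- arithmetic
  have hνr : Real.sqrt d * ν ≤ r := by
    have : ν ≤ r / Real.sqrt d := by
      rw [hr, div_div]
      rwa [mul_comm (Real.sqrt d) L] at hν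
    calc Real.sqrt d * ν ≤ Real.sqrt d * (r / Real.sqrt d) :=
          mul_le_mul_of_nonneg_left this hsd0.le
      _ = r := by field_simp
  have hrM : r ≤ (L - L') / (4 * M) := by
    rw [hr, div_le_div_iff₀ hL (by positivity)]
    calc -(f x0) * (4 * M) ≤ (L * (L - L') / (4 * M)) * (4 * M) := by
          apply mul_le_mul_of_nonneg_right hclose; positivity
      _ = (L - L') * L := by field_simp
  have hfx0 : f x0 = -(L * r) := by rw [hr]; field_simp
  have hM3 : M * r ≤ (L - L') / 4 := by
    calc M * r ≤ M * ((L - L') / (4 * M)) := mul_le_mul_of_nonneg_left hrM hM.le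
      _ = (L - L') / 4 := by field_simp
  have hn0 : 0 ≤ ‖h‖ := norm_nonneg _
  have hsdν : Real.sqrt d * (M * ν) ≤ M * r := by
    calc Real.sqrt d * (M * ν) = M * (Real.sqrt d * ν) := by ring
      _ ≤ M * r := mul_le_mul_of_nonneg_left hνr hM.le
  have ht2 : ‖h‖ ^ 2 ≤ r * ‖h‖ := by nlinarith
  nlinarith [mul_le_mul_of_nonneg_right hsdν hn0, mul_le_mul_of_nonneg_right hM3 hn0,
    mul_le_mul_of_nonneg_right hhr (show (0:ℝ) ≤ (3 * L + L') / 4 by linarith),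
    hinner, ht2, hr0.le, hn0]
end

section
/- Let d ≥ 1 and let f_0 : ℝ^d → ℝ be Lipschitz continuous. Let (x_k)_{k≥0} be a sequence in ℝ^d such that (f_0(x_k))_{k≥0} is nonincreasing and ‖x_{k+1} − x_k‖ → 0 as k → ∞. Suppose x_τ ∈ ℝ^d is an accumulation point of (x_k) (i.e., some subsequence converges to x_τ) and x_τ is a strict local minimizer of f_0: there exists ε_0 > 0 such that f_0(x) > f_0(x_τ) for every x with 0 < ‖x − x_τ‖ ≤ ε_0. Then the whole sequence (x_k) converges to x_τ. -/
open Filter Topology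

/-- Convergence lemma: if the objective values are nonincreasing, the step
sizes vanish, and some accumulation point `x_τ` is a strict local minimizer of
the Lipschitz objective `f₀`, then the whole sequence converges to `x_τ`. -/
theorem stmt7 {d : ℕ} (hd : 1 ≤ d)
    (f0 : EuclideanSpace ℝ (Fin d) → ℝ)
    (ℓ : ℝ) (hℓ : 0 < ℓ)
    (hlip : ∀ x y : EuclideanSpace ℝ (Fin d), |f0 x - f0 y| ≤ ℓ * ‖x - y‖)
    (x : ℕ → EuclideanSpace ℝ (Fin d))
    (hmono : Antitone fun k => f0 (x k))
    (hstep : Tendsto (fun k => ‖x (k + 1) - x k‖) atTop (𝓝 0))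
    (xτ : EuclideanSpace ℝ (Fin d))
    (hacc : ∃ φ : ℕ → ℕ, StrictMono φ ∧ Tendsto (fun p => x (φ p)) atTop (𝓝 xτ))
    (ε0 : ℝ) (hε0 : 0 < ε0)
    (hstrict : ∀ y : EuclideanSpace ℝ (Fin d),
      0 < ‖y - xτ‖ → ‖y - xτ‖ ≤ ε0 → f0 xτ < f0 y) :
    Tendsto x atTop (𝓝 xτ) := by
  obtain ⟨φ, hφ, hconv⟩ := hacc
  have hcont : Continuous f0 := by
    have hL : LipschitzWith ⟨ℓ, hℓ.le⟩ f0 := by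
      apply LipschitzWith.of_dist_le_mul
      intro a b
      rw [Real.dist_eq, dist_eq_norm]; exact hlip a b
    exact hL.continuous
  have hτlim : Tendsto (fun p => f0 (x (φ p))) atTop (𝓝 (f0 xτ)) :=
    (hcont.tendsto xτ).comp hconv
  have flim : Tendsto (fun k => f0 (x k)) atTop (𝓝 (f0 xτ)) := by
    rcases tendsto_of_antitone hmono with h | ⟨l, hl⟩
    · exact absurd hτlim (not_tendsto_nhds_of_tendsto_atBot
        (h.comp hφ.tendsto_atTop) _)
    · have h2 := hl.comp hφ.tendsto_atTop
      rwa [tendsto_nhds_unique h2 hτlim] at hl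
  rw [Metric.tendsto_atTop]
  intro ε hε
  set ε' := min ε ε0 with hε'def
  have hε' : 0 < ε' := lt_min hε hε0
  set S := Metric.closedBall xτ ε' \ Metric.ball xτ (ε' / 2) with hS
  have hSc : IsCompact S := (isCompact_closedBall xτ ε').diff Metric.isOpen_ball
  have hSne : S.Nonempty := by
    refine ⟨xτ + ε' • EuclideanSpace.single (⟨0, hd⟩ : Fin d) (1 : ℝ), ?_, ?_⟩
    · have : dist (xτ + ε' • EuclideanSpace.single (⟨0, hd⟩ : Fin d) (1 : ℝ)) xτ = ε' := by
        rw [dist_eq_norm]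
        simp [norm_smul, abs_of_pos hε', EuclideanSpace.norm_single]
      simp [Metric.mem_closedBall, this]
    · have : dist (xτ + ε' • EuclideanSpace.single (⟨0, hd⟩ : Fin d) (1 : ℝ)) xτ = ε' := by
        rw [dist_eq_norm]
        simp [norm_smul, abs_of_pos hε', EuclideanSpace.norm_single]
      simp [Metric.mem_ball, this]
      linarith
  obtain ⟨y0, hy0S, hy0min⟩ := hSc.exists_isMinOn hSne hcont.continuousOn
  have hy0d1 : dist y0 xτ ≤ ε' := Metric.mem_closedBall.mp hy0S.1
  have hy0d2 : ε' / 2 ≤ dist y0 xτ := le_of_not_gt (by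
    intro h; exact hy0S.2 (Metric.mem_ball.mpr h))
  have hm : f0 xτ < f0 y0 := by
    apply hstrict
    · rw [← dist_eq_norm]; linarith
    · rw [← dist_eq_norm]; exact hy0d1.trans (min_le_right _ _)
  have hN1 : ∀ᶠ k in atTop, f0 (x k) < f0 y0 := flim.eventually (gt_mem_nhds hm)
  have hN2 : ∀ᶠ k in atTop, ‖x (k + 1) - x k‖ < ε' / 2 :=
    hstep.eventually (gt_mem_nhds (half_pos hε'))
  obtain ⟨N1, hN1'⟩ := eventually_atTop.mp hN1
  obtain ⟨N2, hN2'⟩ := eventually_atTop.mp hN2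
  have hball : ∀ᶠ p in atTop, dist (x (φ p)) xτ < ε' / 2 := by
    have := hconv.eventually (Metric.ball_mem_nhds xτ (half_pos hε'))
    exact this.mono fun p hp => Metric.mem_ball.mp hp
  obtain ⟨p, hp1, hp2'⟩ := ((eventually_ge_atTop (max N1 N2)).and hball).exists
  obtain ⟨k0, hk0ge, hp2⟩ : ∃ k0, max N1 N2 ≤ k0 ∧ dist (x k0) xτ < ε' / 2 :=
    ⟨φ p, hp1.trans (hφ.id_le p), hp2'⟩
  have key : ∀ k, k0 ≤ k → dist (x k) xτ < ε' / 2 := by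
    intro k hk
    induction k with
    | zero =>
      have h0 : k0 = 0 := Nat.le_zero.mp hk
      exact h0 ▸ hp2
    | succ k ih =>
      rcases eq_or_lt_of_le hk with h | h
      · exact h ▸ hp2
      · have hk' : k0 ≤ k := Nat.lt_succ_iff.mp h
        have ihk := ih hk'
        have hkN2 : N2 ≤ k := le_trans (le_max_right N1 N2) (hk0ge.trans hk')
        have hstep' : ‖x (k + 1) - x k‖ < ε' / 2 := hN2' k hkN2
        have hclose : dist (x (k + 1)) xτ ≤ ε' := by
          calc dist (x (k + 1)) xτ ≤ dist (x (k + 1)) (x k) + dist (x k) xτ :=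
                dist_triangle _ _ _
            _ ≤ ε' := by rw [dist_eq_norm]; linarith
        by_contra hcon
        push_neg at hcon
        have hmem : x (k + 1) ∈ S := by
          refine ⟨Metric.mem_closedBall.mpr hclose, ?_⟩
          intro hb
          exact absurd (Metric.mem_ball.mp hb) (not_lt.mpr hcon)
        have h1 : f0 y0 ≤ f0 (x (k + 1)) := hy0min hmem
        have h2 : f0 (x (k + 1)) < f0 y0 :=
          hN1' (k + 1) (le_trans (le_max_left N1 N2) (hk0ge.trans (Nat.le_succ_of_le hk')))
        linarith
  refine ⟨k0, fun k hk => ?_⟩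
  have := key k hk
  have hε'ε : ε' ≤ ε := min_le_left _ _
  linarith
end

section
/- Let d, m ≥ 1, let c_1, …, c_m ≤ 0 be real numbers, g_1, …, g_m ∈ ℝ^d, M_1, …, M_m > 0, and x_c ∈ ℝ^d. Suppose the active index set A = {i ∈ {1,…,m} : c_i = 0} is nonempty and the vectors {g_i : i ∈ A} are linearly independent. Then there exists x ∈ ℝ^d such that c_i + ⟨g_i, x − x_c⟩ + 2 M_i ‖x − x_c‖² < 0 for every i ∈ {1,…,m}; i.e., the intersection of the quadratic proxy sets {x : c_i + ⟨g_i, x − x_c⟩ + 2M_i‖x − x_c‖² ≤ 0} has a strictly feasible point. -/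
open scoped RealInnerProductSpace
open Filter Topology

/-- The linear map collecting inner products against a linearly independent
family is surjective. -/
lemma surj_inner_map {d : ℕ} {ι : Type*} [Fintype ι]
    (g : ι → EuclideanSpace ℝ (Fin d))
    (hg : LinearIndependent ℝ g) :
    Function.Surjective (fun x : EuclideanSpace ℝ (Fin d) =>
      (fun i : ι => (inner ℝ (g i) x : ℝ))) := by
  classical
  let T : EuclideanSpace ℝ (Fin d) →ₗ[ℝ] (ι → ℝ) :=
    { toFun := fun x => fun i => (inner ℝ (g i) x : ℝ)
      map_add' := by intro x y; funext i; simp [inner_add_right]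
      map_smul' := by intro a x; funext i; simp [inner_smul_right] }
  let K : Submodule ℝ (EuclideanSpace ℝ (Fin d)) := Submodule.span ℝ (Set.range g)
  have hker : LinearMap.ker T = Kᗮ := by
    ext x
    constructor
    · intro hx
      rw [Submodule.mem_orthogonal]
      intro u hu
      have : K ≤ LinearMap.ker ((innerₛₗ ℝ).flip x) := by
        rw [Submodule.span_le]
        rintro _ ⟨i, rfl⟩
        have := congrFun (LinearMap.mem_ker.mp hx) i
        simpa [T] using this
      exact this hu
    · intro hx
      rw [Submodule.mem_orthogonal] at hx
      rw [LinearMap.mem_ker]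
      funext i
      exact hx (g i) (Submodule.subset_span ⟨i, rfl⟩)
  have hK : Module.finrank ℝ K = Fintype.card ι := finrank_span_eq_card hg
  have hrange : LinearMap.range T = ⊤ := by
    apply Submodule.eq_top_of_finrank_eq
    have h1 : Module.finrank ℝ (LinearMap.range T) + Module.finrank ℝ (LinearMap.ker T)
        = Module.finrank ℝ (EuclideanSpace ℝ (Fin d)) := LinearMap.finrank_range_add_finrank_ker T
    have h2 : Module.finrank ℝ K + Module.finrank ℝ Kᗮ
        = Module.finrank ℝ (EuclideanSpace ℝ (Fin d)) :=
      K.finrank_add_finrank_orthogonal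
    have h3 : Module.finrank ℝ (ι → ℝ) = Fintype.card ι := by
      simp [Module.finrank_pi]
    rw [h3]; rw [hker] at h1
    omega
  intro y
  obtain ⟨x, hx⟩ := (LinearMap.range_eq_top.mp hrange) y
  exact ⟨x, hx⟩

/-- Under LICQ at a feasible point, the intersection of the quadratic proxy
sets `{x : c_i + ⟨g_i, x − x_c⟩ + 2M_i‖x − x_c‖² ≤ 0}` has a strictly feasible
point. -/
theorem stmt8 {d m : ℕ} (hd : 1 ≤ d) (hm : 1 ≤ m)
    (c : Fin m → ℝ) (hc : ∀ i, c i ≤ 0)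
    (g : Fin m → EuclideanSpace ℝ (Fin d))
    (M : Fin m → ℝ) (hM : ∀ i, 0 < M i)
    (xc : EuclideanSpace ℝ (Fin d))
    (hA : ∃ i : Fin m, c i = 0)
    (hLICQ : LinearIndependent ℝ (fun i : {i : Fin m // c i = 0} => g i.1)) :
    ∃ x : EuclideanSpace ℝ (Fin d), ∀ i : Fin m,
      c i + (inner ℝ (g i) (x - xc) : ℝ) + 2 * M i * ‖x - xc‖ ^ 2 < 0 := by
  classical
  obtain ⟨v, hv⟩ := surj_inner_map _ hLICQ (fun _ => (-1 : ℝ))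
  -- for each i, the function t ↦ c i + t⟨g i, v⟩ + 2 M i t² ‖v‖² is
  -- eventually negative on 𝓝[>] 0
  have key : ∀ᶠ t in 𝓝[>] (0 : ℝ), ∀ i : Fin m,
      c i + t * (inner ℝ (g i) v : ℝ) + 2 * M i * (t ^ 2 * ‖v‖ ^ 2) < 0 := by
    rw [eventually_all]
    intro i
    rcases eq_or_lt_of_le (hc i) with hci | hci
    · -- active constraint: inner product is -1
      have hgi : (inner ℝ (g i) v : ℝ) = -1 := congrFun hv ⟨i, hci⟩
      have h1 : ∀ᶠ t in 𝓝[>] (0 : ℝ), (0 : ℝ) < t :=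
        eventually_mem_nhdsWithin
      have h2 : ∀ᶠ t in 𝓝[>] (0 : ℝ), 2 * M i * (t * ‖v‖ ^ 2) - 1 < 0 := by
        have : Filter.Tendsto (fun t : ℝ => 2 * M i * (t * ‖v‖ ^ 2) - 1)
            (𝓝[>] 0) (𝓝 (2 * M i * (0 * ‖v‖ ^ 2) - 1)) := by
          apply Filter.Tendsto.mono_left _ nhdsWithin_le_nhds
          exact (Continuous.tendsto (by continuity) 0)
        apply this.eventually_lt_const
        simp
      filter_upwards [h1, h2] with t ht1 ht2
      rw [hgi, hci]
      have : (0:ℝ) + t * (-1) + 2 * M i * (t ^ 2 * ‖v‖ ^ 2)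
          = t * (2 * M i * (t * ‖v‖ ^ 2) - 1) := by ring
      rw [this]
      exact mul_neg_of_pos_of_neg ht1 ht2
    · -- inactive constraint: by continuity
      have : Filter.Tendsto
          (fun t : ℝ => c i + t * (inner ℝ (g i) v : ℝ) + 2 * M i * (t ^ 2 * ‖v‖ ^ 2))
          (𝓝[>] 0) (𝓝 (c i + 0 * (inner ℝ (g i) v : ℝ) + 2 * M i * (0 ^ 2 * ‖v‖ ^ 2))) := by
        apply Filter.Tendsto.mono_left _ nhdsWithin_le_nhds
        exact (Continuous.tendsto (by continuity) 0)
      apply this.eventually_lt_const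
      simpa using hci
  obtain ⟨t, ht⟩ := key.exists
  refine ⟨xc + t • v, fun i => ?_⟩
  have hsub : xc + t • v - xc = t • v := by abel
  rw [hsub, inner_smul_right, norm_smul]
  have : (‖t‖ * ‖v‖) ^ 2 = t ^ 2 * ‖v‖ ^ 2 := by
    rw [mul_pow]; simp [Real.norm_eq_abs, sq_abs]
  rw [this]
  exact ht i
end

section
/- Let d, m ≥ 1 and let f_0, f_1, …, f_m : ℝ^d → ℝ be differentiable; suppose for each i ∈ {1,…,m} that f_i is L_i-Lipschitz and ∇f_i is M_i-Lipschitz, with L_i, M_i > 0. Set α_i = √d·M_i/2, α_max = max_{1≤i≤m} α_i, L_max = max_i L_i, M_max = max_i M_i. Let μ > 0, Λ > 0, η > 0, and let ξ = min{ η/(60 Λ Σ_{i=1}^m M_i), η/(12 μ), 1, η/(4Λ(α_max + 2 L_max + 2 M_max)) }. Let x, x' ∈ ℝ^d satisfy ‖x' − x‖ ≤ ξ and f_i(x') ≤ 0 for all i, and let ν satisfy 0 < ν ≤ min{ ξ, η/(12 α_max m Λ) }. Suppose λ ∈ ℝ^m satisfies 0 ≤ λ^{(i)} ≤ 2Λ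 for all i, together with the approximate KKT conditions of the quadratic subproblem: (a) ‖∇f_0(x') + 2μ(x' − x) + Σ_{i=1}^m λ^{(i)}( ∇^ν f_i(x) + 4M_i(x' − x) )‖ ≤ η/2, and (b) |λ^{(i)}( f_i(x) + ⟨∇^ν f_i(x), x' − x⟩ + 2M_i‖x' − x‖² )| ≤ η/2 for every i. Then (x', λ) is an η-KKT pair of the problem min f_0(x) subject to f_i(x) ≤ 0, i = 1,…,m: namely ‖∇f_0(x') + Σ_{i=1}^m λ^{(i)} ∇f_i(x')‖ ≤ η and |λ^{(i)} f_i(x')| ≤ η for every i. -/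
open scoped BigOperators
open scoped Gradient

section Aux

variable {F : Type*} [NormedAddCommGroup F] [InnerProductSpace ℝ F] [CompleteSpace F]

lemma grad_lipschitzWith {f : F → ℝ} {M : ℝ} (hM : 0 ≤ M)
    (hg : ∀ x y, ‖∇ f x - ∇ f y‖ ≤ M * ‖x - y‖) :
    LipschitzWith (Real.toNNReal M) (∇ f) := by
  refine LipschitzWith.of_dist_le_mul fun x y => ?_
  rw [dist_eq_norm, dist_eq_norm]
  calc ‖∇ f x - ∇ f y‖ ≤ M * ‖x - y‖ := hg x y
  _ = (Real.toNNReal M : ℝ) * ‖x - y‖ := by rw [Real.coe_toNNReal M hM]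

lemma taylor1 {f : F → ℝ} (hf : Differentiable ℝ f) {M : ℝ} (hM : 0 ≤ M)
    (hg : ∀ x y, ‖∇ f x - ∇ f y‖ ≤ M * ‖x - y‖) (x v : F) :
    |f (x + v) - f x - inner ℝ (∇ f x) v| ≤ M / 2 * ‖v‖ ^ 2 := by
  have hd : ∀ t : ℝ, HasDerivAt (fun t : ℝ => f (x + t • v))
      (inner ℝ (∇ f (x + t • v)) v : ℝ) t := by
    intro t
    have h1 : HasDerivAt (fun t : ℝ => x + t • v) v t := by
      simpa using ((hasDerivAt_id t).smul_const v).const_add x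
    have h2 := ((hf (x + t • v)).hasFDerivAt).comp_hasDerivAt t h1
    have : fderiv ℝ f (x + t • v) v = inner ℝ (∇ f (x + t • v)) v := by
      simp [gradient, InnerProductSpace.toDual_apply_apply]
    rwa [this] at h2
  have hcont : Continuous fun t : ℝ => (inner ℝ (∇ f (x + t • v)) v : ℝ) := by
    have h1 : Continuous (∇ f) := (grad_lipschitzWith hM hg).continuous
    exact (h1.comp (by continuity)).inner continuous_const
  have hint : f (x + v) - f x = ∫ t in (0:ℝ)..1, (inner ℝ (∇ f (x + t • v)) v : ℝ) := by
    have := intervalIntegral.integral_eq_sub_of_hasDerivAt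
      (f := fun t : ℝ => f (x + t • v)) (a := 0) (b := 1)
      (fun t _ => hd t) (hcont.intervalIntegrable 0 1)
    simpa using this.symm
  have heq : f (x + v) - f x - inner ℝ (∇ f x) v
      = ∫ t in (0:ℝ)..1, ((inner ℝ (∇ f (x + t • v)) v : ℝ) - inner ℝ (∇ f x) v) := by
    rw [intervalIntegral.integral_sub (hcont.intervalIntegrable 0 1)
      (intervalIntegrable_const), ← hint]
    simp
  rw [heq]
  have hb : ∀ t ∈ Set.Icc (0:ℝ) 1,
      |(inner ℝ (∇ f (x + t • v)) v : ℝ) - inner ℝ (∇ f x) v| ≤ M * ‖v‖^2 * t := by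
    intro t ht
    have : (inner ℝ (∇ f (x + t • v)) v : ℝ) - inner ℝ (∇ f x) v
        = inner ℝ (∇ f (x + t • v) - ∇ f x) v := by rw [inner_sub_left]
    rw [this]
    calc |(inner ℝ (∇ f (x + t • v) - ∇ f x) v : ℝ)|
        ≤ ‖∇ f (x + t • v) - ∇ f x‖ * ‖v‖ := abs_real_inner_le_norm _ _
      _ ≤ (M * ‖t • v‖) * ‖v‖ := by
          gcongr; simpa using hg (x + t • v) x
      _ = M * ‖v‖^2 * t := by
          rw [norm_smul, Real.norm_eq_abs, abs_of_nonneg ht.1]; ring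
  calc |∫ t in (0:ℝ)..1, ((inner ℝ (∇ f (x + t • v)) v : ℝ) - inner ℝ (∇ f x) v)|
      ≤ ∫ t in (0:ℝ)..1, M * ‖v‖^2 * t := by
        apply intervalIntegral.abs_integral_le_integral_abs (by norm_num) |>.trans
        apply intervalIntegral.integral_mono_on (by norm_num)
        · exact ((hcont.sub continuous_const).abs).intervalIntegrable 0 1
        · exact (continuous_const.mul continuous_id).intervalIntegrable 0 1
        · exact hb
    _ = M / 2 * ‖v‖ ^ 2 := by
        rw [intervalIntegral.integral_const_mul, integral_id]; ring

lemma grad_norm_le {f : F → ℝ} {L : ℝ} (hL : 0 ≤ L)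
    (hlip : ∀ x y, |f x - f y| ≤ L * ‖x - y‖) (x : F) : ‖∇ f x‖ ≤ L := by
  have h : LipschitzWith (Real.toNNReal L) f := by
    refine LipschitzWith.of_dist_le_mul fun a b => ?_
    rw [Real.dist_eq, dist_eq_norm, Real.coe_toNNReal L hL]
    exact hlip a b
  have := norm_fderiv_le_of_lipschitz ℝ h (x₀ := x)
  rw [Real.coe_toNNReal L hL] at this
  calc ‖∇ f x‖ = ‖fderiv ℝ f x‖ := by simp [gradient]
    _ ≤ L := this

end Aux

lemma fd_coord {d : ℕ} (f : EuclideanSpace ℝ (Fin d) → ℝ) (ν : ℝ)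
    (x : EuclideanSpace ℝ (Fin d)) (i : Fin d) :
    (fdGrad f ν x - ∇ f x) i
      = (f (x + ν • EuclideanSpace.single i (1:ℝ)) - f x) / ν - (∇ f x) i := by
  have : fdGrad f ν x i = (f (x + ν • EuclideanSpace.single i (1:ℝ)) - f x) / ν := by
    rw [fdGrad, WithLp.ofLp_sum, Finset.sum_apply i Finset.univ]
    simp [PiLp.smul_apply, EuclideanSpace.single_apply]
  simp [PiLp.sub_apply, this]

lemma fd_err {d : ℕ} {f : EuclideanSpace ℝ (Fin d) → ℝ} (hf : Differentiable ℝ f)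
    {M ν : ℝ} (hM : 0 ≤ M) (hν : 0 < ν)
    (hg : ∀ x y, ‖∇ f x - ∇ f y‖ ≤ M * ‖x - y‖) (x : EuclideanSpace ℝ (Fin d)) :
    ‖fdGrad f ν x - ∇ f x‖ ≤ Real.sqrt d * M * ν / 2 := by
  have hco : ∀ i : Fin d, |(fdGrad f ν x - ∇ f x) i| ≤ M * ν / 2 := by
    intro i
    rw [fd_coord f ν x i]
    set v := ν • EuclideanSpace.single i (1:ℝ) with hv
    have hnv : ‖v‖ = ν := by
      simp [hv, norm_smul, abs_of_pos hν]
    have hin : (inner ℝ (∇ f x) v : ℝ) = ν * (∇ f x) i := by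
      rw [hv, real_inner_smul_right]
      congr 1
      rw [EuclideanSpace.inner_single_right]; simp
    have ht := taylor1 hf hM hg x v
    rw [hnv, hin] at ht
    have : (f (x + v) - f x) / ν - (∇ f x) i
        = (f (x + v) - f x - ν * (∇ f x) i) / ν := by field_simp
    rw [this, abs_div, abs_of_pos hν, div_le_iff₀ hν]
    calc |f (x + v) - f x - ν * (∇ f x) i| ≤ M / 2 * ν ^ 2 := ht
      _ = M * ν / 2 * ν := by ring
  have h1 : ‖fdGrad f ν x - ∇ f x‖
      = Real.sqrt (∑ i : Fin d, ‖(fdGrad f ν x - ∇ f x) i‖ ^ 2) :=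
    EuclideanSpace.norm_eq _
  rw [h1]
  have h2 : (∑ i : Fin d, ‖(fdGrad f ν x - ∇ f x) i‖ ^ 2) ≤ d * (M * ν / 2)^2 := by
    calc (∑ i : Fin d, ‖(fdGrad f ν x - ∇ f x) i‖ ^ 2)
        ≤ ∑ _i : Fin d, (M * ν / 2)^2 := by
          apply Finset.sum_le_sum
          intro i _
          rw [Real.norm_eq_abs]
          have := hco i
          have h0 : (0:ℝ) ≤ M * ν / 2 := by positivity
          nlinarith [abs_nonneg ((fdGrad f ν x - ∇ f x) i)]
      _ = d * (M * ν / 2)^2 := by simp [Finset.sum_const, nsmul_eq_mul]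
  calc Real.sqrt (∑ i : Fin d, ‖(fdGrad f ν x - ∇ f x) i‖ ^ 2)
      ≤ Real.sqrt (d * (M * ν / 2)^2) := Real.sqrt_le_sqrt h2
    _ = Real.sqrt d * (M * ν / 2) := by
        rw [Real.sqrt_mul (by positivity), Real.sqrt_sq (by positivity)]
    _ = Real.sqrt d * M * ν / 2 := by ring

set_option maxHeartbeats 1000000 in
/-- If `(x', λ)` satisfies the `η/2`-approximate KKT conditions of the
quadratic subproblem at the previous iterate `x`, with `‖x' − x‖ ≤ ξ`,
`λ^{(i)} ∈ [0, 2Λ]`, and `ξ`, `ν` chosen according to the paper's formulas,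
then `(x', λ)` is an `η`-KKT pair of the original problem. -/
theorem stmt11 {d m : ℕ} (hd : 1 ≤ d) (hm : 1 ≤ m)
    (f0 : EuclideanSpace ℝ (Fin d) → ℝ) (f : Fin m → EuclideanSpace ℝ (Fin d) → ℝ)
    (hf0 : Differentiable ℝ f0) (hf : ∀ i, Differentiable ℝ (f i))
    (L M : Fin m → ℝ) (hL : ∀ i, 0 < L i) (hM : ∀ i, 0 < M i)
    (hlip : ∀ i, ∀ x y : EuclideanSpace ℝ (Fin d), |f i x - f i y| ≤ L i * ‖x - y‖)
    (hglip : ∀ i, ∀ x y : EuclideanSpace ℝ (Fin d),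
      ‖gradient (f i) x - gradient (f i) y‖ ≤ M i * ‖x - y‖)
    (αmax Lmax Mmax : ℝ)
    (hαmax : IsGreatest (Set.range fun i => Real.sqrt d * M i / 2) αmax)
    (hLmax : IsGreatest (Set.range L) Lmax)
    (hMmax : IsGreatest (Set.range M) Mmax)
    (μ Λ η : ℝ) (hμ : 0 < μ) (hΛ : 0 < Λ) (hη : 0 < η)
    (ξ : ℝ)
    (hξ : ξ = min (η / (60 * Λ * ∑ i : Fin m, M i))
      (min (η / (12 * μ))
        (min 1 (η / (4 * Λ * (αmax + 2 * Lmax + 2 * Mmax))))))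
    (xk xk1 : EuclideanSpace ℝ (Fin d))
    (hstep : ‖xk1 - xk‖ ≤ ξ) (hfeas : ∀ i, f i xk1 ≤ 0)
    (ν : ℝ) (hν0 : 0 < ν)
    (hν : ν ≤ min ξ (η / (12 * αmax * m * Λ)))
    (lam : Fin m → ℝ) (hlam0 : ∀ i, 0 ≤ lam i) (hlam2Λ : ∀ i, lam i ≤ 2 * Λ)
    (ha : ‖gradient f0 xk1 + (2 * μ) • (xk1 - xk) +
        ∑ i : Fin m, lam i • (fdGrad (f i) ν xk + (4 * M i) • (xk1 - xk))‖ ≤ η / 2)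
    (hb : ∀ i : Fin m,
      |lam i * (f i xk + (inner ℝ (fdGrad (f i) ν xk) (xk1 - xk) : ℝ)
          + 2 * M i * ‖xk1 - xk‖ ^ 2)| ≤ η / 2) :
    ‖gradient f0 xk1 + ∑ i : Fin m, lam i • gradient (f i) xk1‖ ≤ η ∧
    ∀ i : Fin m, |lam i * f i xk1| ≤ η := by
  -- basic positivity facts
  have i0 : Fin m := ⟨0, hm⟩
  have hsqd : (1:ℝ) ≤ Real.sqrt d := by
    rw [show (1:ℝ) = Real.sqrt 1 by simp]
    exact Real.sqrt_le_sqrt (by exact_mod_cast hd)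
  have hαi : ∀ i : Fin m, Real.sqrt d * M i / 2 ≤ αmax := fun i => hαmax.2 ⟨i, rfl⟩
  have hLi : ∀ i : Fin m, L i ≤ Lmax := fun i => hLmax.2 ⟨i, rfl⟩
  have hMi : ∀ i : Fin m, M i ≤ Mmax := fun i => hMmax.2 ⟨i, rfl⟩
  have hα0 : 0 < αmax := lt_of_lt_of_le (by nlinarith [hM i0]) (hαi i0)
  have hL0 : 0 < Lmax := lt_of_lt_of_le (hL i0) (hLi i0)
  have hM0 : 0 < Mmax := lt_of_lt_of_le (hM i0) (hMi i0)
  have hMsum : 0 < ∑ i : Fin m, M i :=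
    Finset.sum_pos (fun i _ => hM i) ⟨i0, Finset.mem_univ i0⟩
  have hm0 : (0:ℝ) < m := by exact_mod_cast hm
  have hν1 : ν ≤ ξ := le_trans hν (min_le_left _ _)
  have hξ0 : 0 < ξ := lt_of_lt_of_le hν0 hν1
  have hξa : ξ ≤ η / (60 * Λ * ∑ i : Fin m, M i) := hξ ▸ min_le_left _ _
  have hξb : ξ ≤ η / (12 * μ) :=
    le_trans (hξ ▸ min_le_right _ _) (min_le_left _ _)
  have hξc : ξ ≤ 1 :=
    le_trans (hξ ▸ min_le_right _ _) (le_trans (min_le_right _ _) (min_le_left _ _))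
  have hξd : ξ ≤ η / (4 * Λ * (αmax + 2 * Lmax + 2 * Mmax)) :=
    le_trans (hξ ▸ min_le_right _ _) (le_trans (min_le_right _ _) (min_le_right _ _))
  have hν2 : ν ≤ η / (12 * αmax * m * Λ) := le_trans hν (min_le_right _ _)
  have f1 : ξ * (60 * Λ * ∑ i : Fin m, M i) ≤ η := by
    rw [← le_div_iff₀ (by positivity)]; exact hξa
  have f2 : ξ * (12 * μ) ≤ η := by
    rw [← le_div_iff₀ (by positivity)]; exact hξb
  have f4 : ξ * (4 * Λ * (αmax + 2 * Lmax + 2 * Mmax)) ≤ η := by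
    rw [← le_div_iff₀ (by positivity)]; exact hξd
  have f5 : ν * (12 * αmax * m * Λ) ≤ η := by
    rw [← le_div_iff₀ (by positivity)]; exact hν2
  set e := xk1 - xk with he
  -- error bound on fdGrad
  have hfd : ∀ i : Fin m, ‖fdGrad (f i) ν xk - ∇ (f i) xk‖ ≤ αmax * ν := by
    intro i
    calc ‖fdGrad (f i) ν xk - ∇ (f i) xk‖
        ≤ Real.sqrt d * M i * ν / 2 := fd_err (hf i) (hM i).le hν0 (hglip i) xk
      _ = (Real.sqrt d * M i / 2) * ν := by ring
      _ ≤ αmax * ν := mul_le_mul_of_nonneg_right (hαi i) hν0.le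
  constructor
  · -- stationarity
    have hw : ∀ i : Fin m,
        ‖fdGrad (f i) ν xk + (4 * M i) • e - ∇ (f i) xk1‖
          ≤ αmax * ν + 5 * M i * ξ := by
      intro i
      have hre : fdGrad (f i) ν xk + (4 * M i) • e - ∇ (f i) xk1
          = (fdGrad (f i) ν xk - ∇ (f i) xk) + (∇ (f i) xk - ∇ (f i) xk1)
            + (4 * M i) • e := by abel
      rw [hre]
      have h2 : ‖∇ (f i) xk - ∇ (f i) xk1‖ ≤ M i * ξ := by
        calc ‖∇ (f i) xk - ∇ (f i) xk1‖ ≤ M i * ‖xk - xk1‖ := hglip i xk xk1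
          _ = M i * ‖e‖ := by rw [he, norm_sub_rev]
          _ ≤ M i * ξ := mul_le_mul_of_nonneg_left hstep (hM i).le
      have h3 : ‖(4 * M i) • e‖ ≤ 4 * M i * ξ := by
        rw [norm_smul, Real.norm_eq_abs,
          abs_of_nonneg (by linarith [hM i] : (0:ℝ) ≤ 4 * M i)]
        exact mul_le_mul_of_nonneg_left hstep (by linarith [hM i])
      calc ‖(fdGrad (f i) ν xk - ∇ (f i) xk) + (∇ (f i) xk - ∇ (f i) xk1)
            + (4 * M i) • e‖
          ≤ ‖(fdGrad (f i) ν xk - ∇ (f i) xk) + (∇ (f i) xk - ∇ (f i) xk1)‖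
            + ‖(4 * M i) • e‖ := norm_add_le _ _
        _ ≤ ‖fdGrad (f i) ν xk - ∇ (f i) xk‖ + ‖∇ (f i) xk - ∇ (f i) xk1‖
            + ‖(4 * M i) • e‖ := by gcongr; exact norm_add_le _ _
        _ ≤ αmax * ν + M i * ξ + 4 * M i * ξ :=
            add_le_add (add_le_add (hfd i) h2) h3
        _ = αmax * ν + 5 * M i * ξ := by ring
    have hGA : gradient f0 xk1 + ∑ i : Fin m, lam i • ∇ (f i) xk1
        = (gradient f0 xk1 + (2 * μ) • e
            + ∑ i : Fin m, lam i • (fdGrad (f i) ν xk + (4 * M i) • e))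
          - (2 * μ) • e
          - ∑ i : Fin m, lam i • (fdGrad (f i) ν xk + (4 * M i) • e - ∇ (f i) xk1) := by
      simp only [smul_sub, Finset.sum_sub_distrib]
      abel
    rw [hGA]
    have hsum : ‖∑ i : Fin m, lam i • (fdGrad (f i) ν xk + (4 * M i) • e - ∇ (f i) xk1)‖
        ≤ 2 * Λ * m * (αmax * ν) + 10 * Λ * ξ * ∑ i : Fin m, M i := by
      calc ‖∑ i : Fin m, lam i • (fdGrad (f i) ν xk + (4 * M i) • e - ∇ (f i) xk1)‖
          ≤ ∑ i : Fin m, ‖lam i • (fdGrad (f i) ν xk + (4 * M i) • e - ∇ (f i) xk1)‖ :=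
            norm_sum_le _ _
        _ ≤ ∑ i : Fin m, (2 * Λ * (αmax * ν) + 10 * Λ * ξ * M i) := by
            apply Finset.sum_le_sum
            intro i _
            rw [norm_smul, Real.norm_eq_abs, abs_of_nonneg (hlam0 i)]
            calc lam i * ‖fdGrad (f i) ν xk + (4 * M i) • e - ∇ (f i) xk1‖
                ≤ (2 * Λ) * (αmax * ν + 5 * M i * ξ) := by
                  apply mul_le_mul (hlam2Λ i) (hw i) (norm_nonneg _) (by positivity)
              _ = 2 * Λ * (αmax * ν) + 10 * Λ * ξ * M i := by ring
        _ = 2 * Λ * m * (αmax * ν) + 10 * Λ * ξ * ∑ i : Fin m, M i := by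
            rw [Finset.sum_add_distrib, Finset.sum_const, ← Finset.mul_sum]
            simp only [nsmul_eq_mul, Finset.card_univ, Fintype.card_fin]
            ring
    have hμe : ‖(2 * μ) • e‖ ≤ 2 * μ * ξ := by
      rw [norm_smul, Real.norm_eq_abs, abs_of_nonneg (by positivity : (0:ℝ) ≤ 2 * μ)]
      exact mul_le_mul_of_nonneg_left hstep (by positivity)
    calc ‖(gradient f0 xk1 + (2 * μ) • e
            + ∑ i : Fin m, lam i • (fdGrad (f i) ν xk + (4 * M i) • e))
          - (2 * μ) • e
          - ∑ i : Fin m, lam i • (fdGrad (f i) ν xk + (4 * M i) • e - ∇ (f i) xk1)‖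
        ≤ ‖(gradient f0 xk1 + (2 * μ) • e
            + ∑ i : Fin m, lam i • (fdGrad (f i) ν xk + (4 * M i) • e)) - (2 * μ) • e‖
          + ‖∑ i : Fin m, lam i • (fdGrad (f i) ν xk + (4 * M i) • e - ∇ (f i) xk1)‖ :=
          norm_sub_le _ _
      _ ≤ ‖gradient f0 xk1 + (2 * μ) • e
            + ∑ i : Fin m, lam i • (fdGrad (f i) ν xk + (4 * M i) • e)‖ + ‖(2 * μ) • e‖
          + ‖∑ i : Fin m, lam i • (fdGrad (f i) ν xk + (4 * M i) • e - ∇ (f i) xk1)‖ := by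
          gcongr; exact norm_sub_le _ _
      _ ≤ η / 2 + 2 * μ * ξ + (2 * Λ * m * (αmax * ν) + 10 * Λ * ξ * ∑ i : Fin m, M i) :=
          add_le_add (add_le_add ha hμe) hsum
      _ ≤ η := by nlinarith [f1, f2, f5]
  · -- complementary slackness
    intro i
    have hfdn : ‖fdGrad (f i) ν xk‖ ≤ Lmax + αmax := by
      have hins : ‖fdGrad (f i) ν xk‖
          ≤ ‖∇ (f i) xk‖ + ‖fdGrad (f i) ν xk - ∇ (f i) xk‖ :=
        norm_le_insert' _ _
      have hgn : ‖∇ (f i) xk‖ ≤ Lmax :=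
        le_trans (grad_norm_le (hL i).le (hlip i) xk) (hLi i)
      have hαν : αmax * ν ≤ αmax :=
        le_trans (mul_le_mul_of_nonneg_left (le_trans hν1 hξc) hα0.le) (by linarith)
      linarith [hfd i]
    set S := f i xk + (inner ℝ (fdGrad (f i) ν xk) e : ℝ) + 2 * M i * ‖e‖ ^ 2 with hS
    have hT : |f i xk1 - S| ≤ ξ * (αmax + 2 * Lmax + 2 * Mmax) := by
      have hT1 : |f i xk1 - f i xk| ≤ Lmax * ξ := by
        calc |f i xk1 - f i xk| ≤ L i * ‖xk1 - xk‖ := hlip i xk1 xk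
          _ ≤ Lmax * ξ := by
              apply mul_le_mul (hLi i) hstep (norm_nonneg _) hL0.le
      have hT2 : |(inner ℝ (fdGrad (f i) ν xk) e : ℝ)| ≤ (Lmax + αmax) * ξ := by
        calc |(inner ℝ (fdGrad (f i) ν xk) e : ℝ)|
            ≤ ‖fdGrad (f i) ν xk‖ * ‖e‖ := abs_real_inner_le_norm _ _
          _ ≤ (Lmax + αmax) * ξ := by
              apply mul_le_mul hfdn hstep (norm_nonneg _) (by linarith)
      have hT3 : |2 * M i * ‖e‖ ^ 2| ≤ 2 * Mmax * ξ := by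
        rw [abs_of_nonneg (mul_nonneg (by linarith [hM i]) (sq_nonneg _))]
        have h1 : ‖e‖ ^ 2 ≤ ξ * ξ := by
          rw [pow_two]
          exact mul_le_mul hstep hstep (norm_nonneg _) hξ0.le
        calc 2 * M i * ‖e‖ ^ 2 ≤ 2 * Mmax * (ξ * ξ) := by
              apply mul_le_mul (by linarith [hMi i]) h1 (by positivity) (by linarith)
          _ ≤ 2 * Mmax * (1 * ξ) := by gcongr
          _ = 2 * Mmax * ξ := by ring
      have : f i xk1 - S = (f i xk1 - f i xk) + (-(inner ℝ (fdGrad (f i) ν xk) e : ℝ))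
          + (-(2 * M i * ‖e‖ ^ 2)) := by rw [hS]; ring
      rw [this]
      calc |(f i xk1 - f i xk) + (-(inner ℝ (fdGrad (f i) ν xk) e : ℝ))
            + (-(2 * M i * ‖e‖ ^ 2))|
          ≤ |f i xk1 - f i xk| + |(-(inner ℝ (fdGrad (f i) ν xk) e : ℝ))|
            + |(-(2 * M i * ‖e‖ ^ 2))| := abs_add_three _ _ _
        _ ≤ Lmax * ξ + (Lmax + αmax) * ξ + 2 * Mmax * ξ := by
            rw [abs_neg, abs_neg]
            exact add_le_add (add_le_add hT1 hT2) hT3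
        _ = ξ * (αmax + 2 * Lmax + 2 * Mmax) := by ring
    have hsplit : lam i * f i xk1 = lam i * S + lam i * (f i xk1 - S) := by ring
    rw [hsplit]
    have h1 : |lam i * S| ≤ η / 2 := by rw [hS]; exact hb i
    have h2 : |lam i * (f i xk1 - S)| ≤ η / 2 := by
      rw [abs_mul, abs_of_nonneg (hlam0 i)]
      calc lam i * |f i xk1 - S| ≤ (2 * Λ) * (ξ * (αmax + 2 * Lmax + 2 * Mmax)) := by
            apply mul_le_mul (hlam2Λ i) hT (abs_nonneg _) (by positivity)
        _ ≤ η / 2 := by nlinarith [f4]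
    calc |lam i * S + lam i * (f i xk1 - S)| ≤ |lam i * S| + |lam i * (f i xk1 - S)| :=
          abs_add_le _ _
      _ ≤ η := by linarith
end
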